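/- Let 𝓗 be a finite arrangement of linear hyperplanes through the origin in ℝ^n and let D be a codimension-one face of 𝓗. Then there are exactly two chambers C with D ≤ C, and these two chambers are opposed by D. -/

import Mathlib

noncomputable section

variable {V : Type*} [NormedAddCommGroup V] [NormedSpace ℝ V] {ι : Type*}

/-- The sign vector of a point with respect to a family of defining linear forms. -/
def sgnVec (f : ι → V →ₗ[ℝ] ℝ) (x : V) : ι → SignType := fun i => SignType.sign (f i x)

/-- The face (cell) of the arrangement containing the point `x`:
the level set of the sign-vector map through `x`. -/
def faceOf (f : ι → V →ₗ[ℝ] ℝ) (x : V) : Set V := {y | sgnVec f y = sgnVec f x}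

/-- The type of faces (cells) of the arrangement with defining forms `f`. -/
def Face (f : ι → V →ₗ[ℝ] ℝ) : Type _ := {C : Set V // ∃ x : V, C = faceOf f x}

/-- The closure order on faces: `C' ≤ C` iff `C' ⊆ closure C`. -/
def FaceLE {f : ι → V →ₗ[ℝ] ℝ} (C' C : Face f) : Prop := C'.1 ⊆ closure C.1

lemma FaceLE.refl {f : ι → V →ₗ[ℝ] ℝ} (C : Face f) : FaceLE C C := subset_closure

lemma FaceLE.trans' {f : ι → V →ₗ[ℝ] ℝ} {C'' C' C : Face f}
    (h1 : FaceLE C'' C') (h2 : FaceLE C' C) : FaceLE C'' C :=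
  h1.trans (closure_minimal h2 isClosed_closure)

/-- The face of the origin. -/
def faceO (f : ι → V →ₗ[ℝ] ℝ) : Face f := ⟨faceOf f 0, 0, rfl⟩

/-- The face of the origin is below every face in the closure order. -/
lemma faceO_le {f : ι → V →ₗ[ℝ] ℝ} (C : Face f) : FaceLE (faceO f) C := by
  obtain ⟨S, x, rfl⟩ := C
  intro y hy
  have hy0 : ∀ i, f i y = 0 := by
    intro i
    have : SignType.sign (f i y) = SignType.sign (f i (0 : V)) := congrFun hy i
    simpa using this
  have hten : Filter.Tendsto (fun t : ℝ => y + t • x) (nhdsWithin 0 (Set.Ioi 0)) (nhds y) := by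
    have h : Filter.Tendsto (fun t : ℝ => y + t • x) (nhds 0) (nhds (y + (0:ℝ) • x)) :=
      tendsto_const_nhds.add ((continuous_id.smul continuous_const).tendsto 0)
    simpa using h.mono_left nhdsWithin_le_nhds
  refine mem_closure_of_tendsto hten ?_
  filter_upwards [self_mem_nhdsWithin] with t ht
  show y + t • x ∈ faceOf f x
  funext i
  simp only [sgnVec, map_add, map_smul, hy0 i, zero_add, smul_eq_mul]
  rw [sign_mul, sign_pos ht, one_mul]

universe w

/-- A double representation of the face poset of an arrangement. -/
structure DoubleRep (f : ι → V →ₗ[ℝ] ℝ) where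
  E : Face f → ModuleCat.{w} ℂ
  finDim : ∀ C, FiniteDimensional ℂ (E C)
  γ : ∀ C' C : Face f, FaceLE C' C → (E C' →ₗ[ℂ] E C)
  δ : ∀ C' C : Face f, FaceLE C' C → (E C →ₗ[ℂ] E C')
  γ_id : ∀ (C : Face f) (h : FaceLE C C), γ C C h = LinearMap.id
  δ_id : ∀ (C : Face f) (h : FaceLE C C), δ C C h = LinearMap.id
  γ_comp : ∀ (C'' C' C : Face f) (h1 : FaceLE C'' C') (h2 : FaceLE C' C),
    γ C'' C (h1.trans' h2) = (γ C' C h2).comp (γ C'' C' h1)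
  δ_comp : ∀ (C'' C' C : Face f) (h1 : FaceLE C'' C') (h2 : FaceLE C' C),
    δ C'' C (h1.trans' h2) = (δ C'' C' h1).comp (δ C' C h2)

/-- The map `φ_{AB} = γ_{OB} ∘ δ_{AO}` of a double representation. -/
def phiMap {f : ι → V →ₗ[ℝ] ℝ} (ψ : DoubleRep f) (A B : Face f) : ψ.E A →ₗ[ℂ] ψ.E B :=
  (ψ.γ (faceO f) B (faceO_le B)).comp (ψ.δ (faceO f) A (faceO_le A))

/-- Monotonicity: `γ_{C'C} ∘ δ_{CC'} = id`. -/
def Monotonicity {f : ι → V →ₗ[ℝ] ℝ} (ψ : DoubleRep f) : Prop :=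
  ∀ (C' C : Face f) (h : FaceLE C' C), (ψ.γ C' C h).comp (ψ.δ C' C h) = LinearMap.id

/-- A collinear triple of faces. -/
def Collin3 {f : ι → V →ₗ[ℝ] ℝ} (A B C : Face f) : Prop :=
  ∃ a ∈ A.1, ∃ b ∈ B.1, ∃ c ∈ C.1, b ∈ segment ℝ a c

/-- Transitivity: `φ_{AC} = φ_{BC} ∘ φ_{AB}` for collinear triples. -/
def Transitivity {f : ι → V →ₗ[ℝ] ℝ} (ψ : DoubleRep f) : Prop :=
  ∀ A B C : Face f, Collin3 A B C → phiMap ψ A C = (phiMap ψ B C).comp (phiMap ψ A B)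

/-- Two faces of equal dimension and equal span are opposed by a face `D` of one lower
dimension. -/
def Opposed (f : ι → V →ₗ[ℝ] ℝ) (C1 C2 D : Face f) : Prop :=
  C1 ≠ C2 ∧ Submodule.span ℝ C1.1 = Submodule.span ℝ C2.1 ∧
  FaceLE D C1 ∧ FaceLE D C2 ∧
  Module.finrank ℝ (Submodule.span ℝ D.1) + 1 = Module.finrank ℝ (Submodule.span ℝ C1.1) ∧
  ∀ i, (∀ d ∈ D.1, f i d = 0) → ∀ y ∈ C1.1, ∀ z ∈ C2.1,
    SignType.sign (f i y) = - SignType.sign (f i z) ∧ SignType.sign (f i y) ≠ 0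

/-- Invertibility: `φ_{C₁C₂}` is an isomorphism whenever `C₁, C₂` are opposed by a face. -/
def Invertibility {f : ι → V →ₗ[ℝ] ℝ} (ψ : DoubleRep f) : Prop :=
  ∀ C1 C2 D : Face f, Opposed f C1 C2 D → Function.Bijective (phiMap ψ C1 C2)

/-- Membership in the category `𝓙_𝓗`. -/
def InJ {f : ι → V →ₗ[ℝ] ℝ} (ψ : DoubleRep f) : Prop :=
  Monotonicity ψ ∧ Transitivity ψ ∧ Invertibility ψ

/-- A chamber: a face on which no defining form vanishes. -/
def IsChamber (f : ι → V →ₗ[ℝ] ℝ) (C : Face f) : Prop := ∀ i, ∀ y ∈ C.1, f i y ≠ 0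

/-- A codimension-one face: exactly one defining form vanishes on it. -/
def IsCodimOne (f : ι → V →ₗ[ℝ] ℝ) (D : Face f) : Prop := ∃! i, ∀ y ∈ D.1, f i y = 0

/-- A subrepresentation of a double representation. -/
def IsSubrep {f : ι → V →ₗ[ℝ] ℝ} (ψ : DoubleRep f) (F : ∀ C, Submodule ℂ (ψ.E C)) : Prop :=
  ∀ (C' C : Face f) (h : FaceLE C' C),
    (∀ v ∈ F C', ψ.γ C' C h v ∈ F C) ∧ (∀ v ∈ F C, ψ.δ C' C h v ∈ F C')

/-- Simplicity of a double representation. -/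
def IsSimpleRep {f : ι → V →ₗ[ℝ] ℝ} (ψ : DoubleRep f) : Prop :=
  (∃ (C : Face f) (v : ψ.E C), v ≠ 0) ∧
  ∀ F, IsSubrep ψ F → (∀ C, F C = ⊥) ∨ (∀ C, F C = ⊤)


lemma sign_eventually_eq' {g : ℝ → ℝ} (hg : Continuous g) (h : g 0 ≠ 0) :
    ∀ᶠ t in nhds (0:ℝ), SignType.sign (g t) = SignType.sign (g 0) := by
  rcases h.lt_or_gt with hneg | hpos
  · filter_upwards [hg.continuousAt.preimage_mem_nhds (Iio_mem_nhds hneg)] with t ht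
    rw [sign_neg ht, sign_neg hneg]
  · filter_upwards [hg.continuousAt.preimage_mem_nhds (Ioi_mem_nhds hpos)] with t ht
    rw [sign_pos ht, sign_pos hpos]

lemma line_tendsto' {W : Type*} [NormedAddCommGroup W] [NormedSpace ℝ W] (y w : W) :
    Filter.Tendsto (fun t : ℝ => y + t • w) (nhdsWithin 0 (Set.Ioi 0)) (nhds y) := by
  have h : Filter.Tendsto (fun t : ℝ => y + t • w) (nhds 0) (nhds (y + (0:ℝ) • w)) :=
    tendsto_const_nhds.add ((continuous_id.smul continuous_const).tendsto 0)
  simpa using h.mono_left nhdsWithin_le_nhds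

/-- Let `D` be a codimension-one face of a finite arrangement of linear
hyperplanes through the origin in `ℝ^n`. Then there are exactly two chambers `C` with
`D ≤ C`, and these two chambers are opposed by `D`. -/
theorem statement16 (n : ℕ) {ι : Type*} [Finite ι]
    (f : ι → (Fin n → ℝ) →ₗ[ℝ] ℝ) (hf : ∀ i, f i ≠ 0)
    (hker : ∀ p q : ι, LinearMap.ker (f p) = LinearMap.ker (f q) → p = q)
    (D : Face f) (hD : IsCodimOne f D) :
    ∃ C1 C2 : Face f, C1 ≠ C2 ∧
      IsChamber f C1 ∧ IsChamber f C2 ∧ FaceLE D C1 ∧ FaceLE D C2 ∧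
      (∀ C : Face f, IsChamber f C → FaceLE D C → C = C1 ∨ C = C2) ∧
      Opposed f C1 C2 D := by
  classical
  obtain ⟨i₀, hi₀, hi₀u⟩ := hD
  obtain ⟨d, hd⟩ := D.2
  have hdmem : d ∈ D.1 := by rw [hd]; exact rfl
  have hd0 : f i₀ d = 0 := hi₀ d hdmem
  have hne : ∀ i, i ≠ i₀ → f i d ≠ 0 := by
    intro i hi h0
    refine hi (hi₀u i fun y hy => ?_)
    have hy' : sgnVec f y = sgnVec f d := by rw [hd] at hy; exact hy
    have : SignType.sign (f i y) = SignType.sign (f i d) := congrFun hy' i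
    rw [h0, sign_zero] at this
    exact sign_eq_zero_iff.mp this
  obtain ⟨e₀, he₀⟩ : ∃ e, f i₀ e ≠ 0 := by
    by_contra h; push_neg at h; exact hf i₀ (LinearMap.ext fun x => h x)
  set e : Fin n → ℝ := if 0 < f i₀ e₀ then e₀ else -e₀ with he_def
  have he : 0 < f i₀ e := by
    by_cases hc : 0 < f i₀ e₀
    · simpa [he_def, hc] using hc
    · have : f i₀ e₀ < 0 := lt_of_le_of_ne (not_lt.mp hc) he₀
      simp only [he_def, if_neg hc, map_neg]
      linarith
  -- eventual sign stability along lines, away from `i₀`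
  have ev : ∀ (y w : Fin n → ℝ), sgnVec f y = sgnVec f d →
      ∀ᶠ s in nhds (0:ℝ), ∀ i, i ≠ i₀ →
        SignType.sign (f i (y + s • w)) = SignType.sign (f i y) := by
    intro y w hy
    rw [Filter.eventually_all]
    intro i
    by_cases hi : i = i₀
    · exact Filter.Eventually.of_forall fun s h => absurd hi h
    · have hy' : f i y ≠ 0 := by
        intro h0
        have : SignType.sign (f i y) = SignType.sign (f i d) := congrFun hy i
        rw [h0, sign_zero] at this
        exact hne i hi (sign_eq_zero_iff.mp this.symm)
      have hg : Continuous (fun s : ℝ => f i (y + s • w)) :=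
        (f i).continuous_of_finiteDimensional.comp
          (continuous_const.add (continuous_id.smul continuous_const))
      have h0 : (fun s : ℝ => f i (y + s • w)) 0 ≠ 0 := by simpa using hy'
      filter_upwards [sign_eventually_eq' hg h0] with s hs _
      rw [hs]; norm_num
  -- the key: moving slightly off `D` in direction `w`
  have key : ∀ (w : Fin n → ℝ), ∀ y, sgnVec f y = sgnVec f d →
      ∀ᶠ s in nhdsWithin (0:ℝ) (Set.Ioi 0),
        sgnVec f (y + s • w) =
          fun i => if i = i₀ then SignType.sign (f i₀ w) else SignType.sign (f i d) := by
    intro w y hy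
    filter_upwards [nhdsWithin_le_nhds (ev y w hy), self_mem_nhdsWithin] with s hs hspos
    funext i
    by_cases hi : i = i₀
    · subst hi
      have hy0 : f i y = 0 := by
        have : SignType.sign (f i y) = SignType.sign (f i d) := congrFun hy i
        rw [hd0, sign_zero] at this
        exact sign_eq_zero_iff.mp this
      show SignType.sign (f i (y + s • w))
        = if i = i then SignType.sign (f i w) else SignType.sign (f i d)
      rw [if_pos rfl]
      have hval : f i (y + s • w) = s * f i w := by simp [hy0]
      rw [hval, sign_mul, sign_pos (Set.mem_Ioi.mp hspos), one_mul]
    · simp only [sgnVec, if_neg hi]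
      rw [hs i hi]
      exact congrFun hy i
  set σp : ι → SignType :=
    fun i => if i = i₀ then SignType.sign (f i₀ e) else SignType.sign (f i d) with hσp_def
  set σm : ι → SignType :=
    fun i => if i = i₀ then SignType.sign (f i₀ (-e)) else SignType.sign (f i d) with hσm_def
  obtain ⟨t, ht⟩ := (key e d rfl).exists
  obtain ⟨t', ht'⟩ := (key (-e) d rfl).exists
  have hσpi₀ : σp i₀ = 1 := by simp [hσp_def, sign_pos he]
  have hσmi₀ : σm i₀ = -1 := by
    simp only [hσm_def, if_pos rfl, map_neg]
    rw [sign_neg (by linarith)]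
  set C1 : Face f := ⟨faceOf f (d + t • e), ⟨_, rfl⟩⟩ with hC1_def
  set C2 : Face f := ⟨faceOf f (d + t' • (-e)), ⟨_, rfl⟩⟩ with hC2_def
  have hC1 : ∀ x, x ∈ C1.1 ↔ sgnVec f x = σp :=
    fun x => ⟨fun h => (show sgnVec f x = _ from h).trans ht,
              fun h => show sgnVec f x = _ from h.trans ht.symm⟩
  have hC2 : ∀ x, x ∈ C2.1 ↔ sgnVec f x = σm :=
    fun x => ⟨fun h => (show sgnVec f x = _ from h).trans ht',
              fun h => show sgnVec f x = _ from h.trans ht'.symm⟩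
  have hσpne : ∀ i, σp i ≠ 0 := by
    intro i
    by_cases hi : i = i₀
    · subst hi; rw [hσpi₀]; decide
    · simp only [hσp_def, if_neg hi]
      simpa [sign_eq_zero_iff] using hne i hi
  have hσmne : ∀ i, σm i ≠ 0 := by
    intro i
    by_cases hi : i = i₀
    · subst hi; rw [hσmi₀]; decide
    · simp only [hσm_def, if_neg hi]
      simpa [sign_eq_zero_iff] using hne i hi
  -- C1 ≠ C2
  have hne12 : C1 ≠ C2 := by
    intro h
    have h1 : (d + t • e) ∈ C1.1 := rfl
    rw [h] at h1
    have h3 : sgnVec f (d + t • e) i₀ = σm i₀ := congrFun ((hC2 _).mp h1) i₀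
    have h2 : sgnVec f (d + t • e) i₀ = σp i₀ := congrFun ht i₀
    rw [hσmi₀] at h3
    rw [hσpi₀] at h2
    rw [h2] at h3
    exact absurd h3 (by decide)
  -- chambers
  have hch1 : IsChamber f C1 := by
    intro i y hy h0
    have := congrFun ((hC1 y).mp hy) i
    simp only [sgnVec] at this
    rw [h0, sign_zero] at this
    exact hσpne i this.symm
  have hch2 : IsChamber f C2 := by
    intro i y hy h0
    have := congrFun ((hC2 y).mp hy) i
    simp only [sgnVec] at this
    rw [h0, sign_zero] at this
    exact hσmne i this.symm
  -- D ≤ C1, D ≤ C2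
  have hle1 : FaceLE D C1 := by
    intro y hy
    have hy' : sgnVec f y = sgnVec f d := by rw [hd] at hy; exact hy
    refine mem_closure_of_tendsto (line_tendsto' y e) ?_
    filter_upwards [key e y hy'] with s hs
    exact (hC1 _).mpr hs
  have hle2 : FaceLE D C2 := by
    intro y hy
    have hy' : sgnVec f y = sgnVec f d := by rw [hd] at hy; exact hy
    refine mem_closure_of_tendsto (line_tendsto' y (-e)) ?_
    filter_upwards [key (-e) y hy'] with s hs
    exact (hC2 _).mpr hs
  -- uniqueness
  have huniq : ∀ C : Face f, IsChamber f C → FaceLE D C → C = C1 ∨ C = C2 := by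
    intro C hC hDC
    obtain ⟨c, hc⟩ := C.2
    have hcm : c ∈ C.1 := by rw [hc]; exact rfl
    have hsc : ∀ i, i ≠ i₀ → SignType.sign (f i c) = SignType.sign (f i d) := by
      intro i hi
      have hdc : d ∈ closure C.1 := hDC hdmem
      have hcont : Continuous (f i) := (f i).continuous_of_finiteDimensional
      rcases (hC i c hcm).lt_or_gt with hneg | hpos
      · have hsub : C.1 ⊆ {x | f i x ≤ 0} := by
          intro x hx
          have hx' : sgnVec f x = sgnVec f c := by rw [hc] at hx; exact hx
          have := congrFun hx' i
          simp only [sgnVec] at this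
          rw [sign_neg hneg] at this
          exact le_of_lt (sign_eq_neg_one_iff.mp this)
        have hclosed : IsClosed {x : Fin n → ℝ | f i x ≤ 0} :=
          IsClosed.preimage hcont isClosed_Iic
        have hdle : f i d ≤ 0 := closure_minimal hsub hclosed hdc
        rw [sign_neg hneg, sign_neg (lt_of_le_of_ne hdle (hne i hi))]
      · have hsub : C.1 ⊆ {x | 0 ≤ f i x} := by
          intro x hx
          have hx' : sgnVec f x = sgnVec f c := by rw [hc] at hx; exact hx
          have := congrFun hx' i
          simp only [sgnVec] at this
          rw [sign_pos hpos] at this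
          exact le_of_lt (sign_eq_one_iff.mp this)
        have hclosed : IsClosed {x : Fin n → ℝ | 0 ≤ f i x} :=
          IsClosed.preimage hcont isClosed_Ici
        have hdge : 0 ≤ f i d := closure_minimal hsub hclosed hdc
        rw [sign_pos hpos, sign_pos (lt_of_le_of_ne hdge (Ne.symm (hne i hi)))]
    rcases (hC i₀ c hcm).lt_or_gt with hneg | hpos
    · right
      have hcv : sgnVec f c = σm := by
        funext i
        by_cases hi : i = i₀
        · rw [hi]
          show SignType.sign (f i₀ c) = σm i₀
          rw [hσmi₀]
          exact sign_neg hneg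
        · simp only [hσm_def, if_neg hi]
          exact hsc i hi
      refine Subtype.ext ?_
      rw [hc, hC2_def]
      show faceOf f c = faceOf f (d + t' • (-e))
      unfold faceOf
      rw [hcv, show sgnVec f (d + t' • (-e)) = σm from ht']
    · left
      have hcv : sgnVec f c = σp := by
        funext i
        by_cases hi : i = i₀
        · rw [hi]
          show SignType.sign (f i₀ c) = σp i₀
          rw [hσpi₀]
          exact sign_pos hpos
        · simp only [hσp_def, if_neg hi]
          exact hsc i hi
      refine Subtype.ext ?_
      rw [hc, hC1_def]
      show faceOf f c = faceOf f (d + t • e)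
      unfold faceOf
      rw [hcv, show sgnVec f (d + t • e) = σp from ht]
  -- spans of chambers are the whole space
  have hopen : ∀ (σ : ι → SignType), (∀ i, σ i ≠ 0) →
      IsOpen {x : Fin n → ℝ | sgnVec f x = σ} := by
    intro σ hσ
    have heq : {x : Fin n → ℝ | sgnVec f x = σ}
        = ⋂ i, {x | SignType.sign (f i x) = σ i} := by
      ext x
      simp only [Set.mem_setOf_eq, Set.mem_iInter, funext_iff]
      rfl
    rw [heq]
    refine isOpen_iInter_of_finite fun i => ?_
    have hcont : Continuous (f i) := (f i).continuous_of_finiteDimensional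
    rcases hσi : σ i with _ | _
    · exact absurd hσi (hσ i)
    · have : {x : Fin n → ℝ | SignType.sign (f i x) = SignType.neg}
          = (f i) ⁻¹' Set.Iio 0 := by
        ext x
        simp only [Set.mem_setOf_eq, Set.mem_preimage, Set.mem_Iio]
        exact sign_eq_neg_one_iff
      rw [this]
      exact IsOpen.preimage hcont isOpen_Iio
    · have : {x : Fin n → ℝ | SignType.sign (f i x) = SignType.pos}
          = (f i) ⁻¹' Set.Ioi 0 := by
        ext x
        simp only [Set.mem_setOf_eq, Set.mem_preimage, Set.mem_Ioi]
        exact sign_eq_one_iff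
      rw [this]
      exact IsOpen.preimage hcont isOpen_Ioi
  have span_top : ∀ (x : Fin n → ℝ) (S : Set (Fin n → ℝ)), IsOpen S → x ∈ S →
      Submodule.span ℝ S = ⊤ := by
    intro x S hS hx
    refine Submodule.eq_top_of_nonempty_interior' _ ⟨x, ?_⟩
    exact interior_maximal Submodule.subset_span hS hx
  have hC1set : C1.1 = {x : Fin n → ℝ | sgnVec f x = σp} := Set.ext hC1
  have hC2set : C2.1 = {x : Fin n → ℝ | sgnVec f x = σm} := Set.ext hC2
  have hspan1 : Submodule.span ℝ C1.1 = ⊤ := by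
    rw [hC1set]
    exact span_top (d + t • e) _ (hopen σp hσpne) ht
  have hspan2 : Submodule.span ℝ C2.1 = ⊤ := by
    rw [hC2set]
    exact span_top (d + t' • (-e)) _ (hopen σm hσmne) ht'
  -- span of D is the hyperplane ker (f i₀)
  have hspanD : Submodule.span ℝ D.1 = LinearMap.ker (f i₀) := by
    apply le_antisymm
    · exact Submodule.span_le.mpr fun y hy => LinearMap.mem_ker.mpr (hi₀ y hy)
    · intro z hz
      have hz0 : f i₀ z = 0 := LinearMap.mem_ker.mp hz
      have hev : ∀ᶠ s : ℝ in nhdsWithin 0 (Set.Ioi 0), (∀ i, i ≠ i₀ →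
            SignType.sign (f i (d + s • z)) = SignType.sign (f i d)) ∧ s ∈ Set.Ioi (0:ℝ) := by
        filter_upwards [nhdsWithin_le_nhds (ev d z rfl), self_mem_nhdsWithin] with s h1 h2
        exact ⟨h1, h2⟩
      obtain ⟨s, hs, hspos⟩ := hev.exists
      have hmem : d + s • z ∈ D.1 := by
        rw [hd]
        show sgnVec f (d + s • z) = sgnVec f d
        funext i
        by_cases hi : i = i₀
        · subst hi
          simp [sgnVec, map_add, map_smul, hd0, hz0]
        · exact hs i hi
      have hzz : z = s⁻¹ • ((d + s • z) - d) := by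
        rw [add_sub_cancel_left, smul_smul, inv_mul_cancel₀ (ne_of_gt (Set.mem_Ioi.mp hspos)),
          one_smul]
      rw [hzz]
      exact Submodule.smul_mem _ _ (Submodule.sub_mem _ (Submodule.subset_span hmem)
        (Submodule.subset_span hdmem))
  have hrank : Module.finrank ℝ (Submodule.span ℝ D.1) + 1
      = Module.finrank ℝ (Submodule.span ℝ C1.1) := by
    rw [hspanD, hspan1, finrank_top]
    have hr : LinearMap.range (f i₀) = ⊤ := by
      rw [LinearMap.range_eq_top]
      intro r
      exact ⟨(r / f i₀ e) • e, by
        rw [map_smul, smul_eq_mul, div_mul_cancel₀ _ (ne_of_gt he)]⟩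
    have hrn := LinearMap.finrank_range_add_finrank_ker (f i₀)
    rw [hr, finrank_top, Module.finrank_self] at hrn
    omega
  -- final sign condition
  have hfinal : ∀ i, (∀ x ∈ D.1, f i x = 0) → ∀ y ∈ C1.1, ∀ z ∈ C2.1,
      SignType.sign (f i y) = - SignType.sign (f i z) ∧ SignType.sign (f i y) ≠ 0 := by
    intro i hvan y hy z hz
    have hii : i = i₀ := hi₀u i hvan
    subst hii
    have h1 : SignType.sign (f i y) = σp i := congrFun ((hC1 y).mp hy) i
    have h2 : SignType.sign (f i z) = σm i := congrFun ((hC2 z).mp hz) i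
    rw [h1, h2, hσpi₀, hσmi₀]
    exact ⟨by decide, by decide⟩
  exact ⟨C1, C2, hne12, hch1, hch2, hle1, hle2, huniq,
    hne12, hspan1.trans hspan2.symm, hle1, hle2, hrank, hfinal⟩

end
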